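/- For every constant c₀ ∈ [0,1) there exists a constant C = C(c₀) > 0 such that the following holds. Let P = U_P S_P U_Pᵀ ∈ ℝ^{n×n} be a rank-d positive semidefinite matrix as in the context, let M ∈ ℝ^{n×n} be symmetric with ‖M − P‖ ≤ c₀ λ_d(P), and let S_M = diag(λ_1(M),…,λ_d(M)) be the diagonal matrix of the d largest eigenvalues of M (all positive by Weyl's inequality). Then for every orthogonal matrix V ∈ ℝ^{d×d}: (i) ‖V S_M^{1/2} − S_P^{1/2} V‖_F ≤ C ‖V S_M − S_P V‖_F / λ_d(P)^{1/2}, and (ii) ‖V S_M^{-1/2} − S_P^{-1/2} V‖_F ≤ C ‖V S_M − S_P V‖_F / λ_d(P)^{3/2}. -/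

import Mathlib

open Matrix
open scoped BigOperators

/-- The Frobenius norm of a real matrix. -/
noncomputable def frobNorm {m n : ℕ} (M : Matrix (Fin m) (Fin n) ℝ) : ℝ :=
  Real.sqrt (∑ i, ∑ j, (M i j) ^ 2)

/-- The spectral (ℓ2 operator) norm of a real square matrix. -/
noncomputable def specNorm {n : ℕ} (M : Matrix (Fin n) (Fin n) ℝ) : ℝ :=
  ‖Matrix.toEuclideanCLM (𝕜 := ℝ) M‖

lemma dot_congr {n d : ℕ} (B : Matrix (Fin n) (Fin d) ℝ) (A : Matrix (Fin n) (Fin n) ℝ) (y : Fin d → ℝ) :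
    y ⬝ᵥ (Bᵀ * A * B).mulVec y = (B.mulVec y) ⬝ᵥ A.mulVec (B.mulVec y) := by
  simp [Matrix.dotProduct_mulVec, ← Matrix.vecMul_vecMul, Matrix.vecMul_transpose, mul_assoc]

lemma dot_sq {n d : ℕ} (B : Matrix (Fin n) (Fin d) ℝ) (hB : Bᵀ * B = 1) (y : Fin d → ℝ) :
    (B.mulVec y) ⬝ᵥ (B.mulVec y) = y ⬝ᵥ y := by
  have := dot_congr B 1 y
  simpa [hB, Matrix.one_mulVec] using this.symm

lemma quad_bound {n : ℕ} (A : Matrix (Fin n) (Fin n) ℝ) (x : Fin n → ℝ) :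
    |x ⬝ᵥ A.mulVec x| ≤ specNorm A * (x ⬝ᵥ x) := by
  set ex : EuclideanSpace ℝ (Fin n) := (WithLp.equiv 2 (Fin n → ℝ)).symm x with hex
  have h1 : x ⬝ᵥ A.mulVec x = inner ℝ ex (Matrix.toEuclideanCLM (𝕜 := ℝ) A ex) := by
    rw [hex, WithLp.equiv_symm_apply, Matrix.toEuclideanCLM_toLp]
    simp [PiLp.inner_apply, dotProduct, Matrix.toLin'_apply, mul_comm]
  have h2 : x ⬝ᵥ x = ‖ex‖ ^ 2 := by
    rw [EuclideanSpace.norm_eq, Real.sq_sqrt (by positivity)]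
    simp [dotProduct, hex, sq]
  rw [h1, h2]
  calc |inner ℝ ex (Matrix.toEuclideanCLM (𝕜 := ℝ) A ex)| ≤ ‖ex‖ * ‖Matrix.toEuclideanCLM (𝕜 := ℝ) A ex‖ :=
        abs_real_inner_le_norm _ _
    _ ≤ ‖ex‖ * (‖Matrix.toEuclideanCLM (𝕜 := ℝ) A‖ * ‖ex‖) := by
        gcongr; exact (Matrix.toEuclideanCLM (𝕜 := ℝ) A).le_opNorm ex
    _ = specNorm A * ‖ex‖ ^ 2 := by rw [specNorm]; ring

lemma exists_ker {d : ℕ} (hd : 0 < d) (B : Matrix (Fin (d-1)) (Fin d) ℝ) :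
    ∃ y : Fin d → ℝ, y ≠ 0 ∧ B.mulVec y = 0 := by
  have hni : ¬ Function.Injective B.mulVecLin := by
    intro hinj
    have h := LinearMap.finrank_le_finrank_of_injective hinj
    simp [Module.finrank_pi] at h
    omega
  obtain ⟨a, b, hab, hne⟩ := Function.not_injective_iff.mp hni
  refine ⟨a - b, sub_ne_zero.mpr hne, ?_⟩
  have : B.mulVecLin (a - b) = 0 := by rw [map_sub, hab, sub_self]
  simpa using this

lemma frob_le {d : ℕ} (A B : Matrix (Fin d) (Fin d) ℝ) (c : ℝ) (hc : 0 ≤ c)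
    (h : ∀ i j, |A i j| ≤ c * |B i j|) : frobNorm A ≤ c * frobNorm B := by
  unfold frobNorm
  rw [← Real.sqrt_sq hc, ← Real.sqrt_mul (sq_nonneg c)]
  apply Real.sqrt_le_sqrt
  rw [Finset.mul_sum]
  apply Finset.sum_le_sum; intro i _
  rw [Finset.mul_sum]
  apply Finset.sum_le_sum; intro j _
  calc A i j ^ 2 = |A i j| ^ 2 := (sq_abs _).symm
    _ ≤ (c * |B i j|) ^ 2 := by apply pow_le_pow_left₀ (abs_nonneg _) (h i j)
    _ = c ^ 2 * B i j ^ 2 := by rw [mul_pow, sq_abs]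

lemma sqrt_diff (a b ε : ℝ) (ha : 0 ≤ a) (hε : 0 < ε) (hb : ε ≤ b) :
    |Real.sqrt a - Real.sqrt b| ≤ |a - b| / Real.sqrt ε := by
  have hb0 : 0 ≤ b := le_trans hε.le hb
  have hsum : Real.sqrt ε ≤ Real.sqrt a + Real.sqrt b :=
    le_trans (Real.sqrt_le_sqrt hb) (le_add_of_nonneg_left (Real.sqrt_nonneg a))
  have hεs : 0 < Real.sqrt ε := Real.sqrt_pos.mpr hε
  rw [le_div_iff₀ hεs]
  have key : (Real.sqrt a - Real.sqrt b) * (Real.sqrt a + Real.sqrt b) = a - b := by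
    nlinarith [Real.sq_sqrt ha, Real.sq_sqrt hb0]
  calc |Real.sqrt a - Real.sqrt b| * Real.sqrt ε
      ≤ |Real.sqrt a - Real.sqrt b| * (Real.sqrt a + Real.sqrt b) := by
        apply mul_le_mul_of_nonneg_left hsum (abs_nonneg _)
    _ = |a - b| := by
        rw [← key, abs_mul, abs_of_nonneg (by positivity : (0:ℝ) ≤ Real.sqrt a + Real.sqrt b)]

lemma inv_sqrt_diff (a b ε t : ℝ) (ht0 : 0 < t) (ha : t * ε ≤ a) (hε : 0 < ε) (hb : ε ≤ b) :
    |(Real.sqrt a)⁻¹ - (Real.sqrt b)⁻¹| ≤ (Real.sqrt t)⁻¹ * |a - b| / (ε * Real.sqrt ε) := by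
  have ha0 : 0 < a := lt_of_lt_of_le (by positivity) ha
  have hb0 : 0 < b := lt_of_lt_of_le hε hb
  have hsa : 0 < Real.sqrt a := Real.sqrt_pos.mpr ha0
  have hsb : 0 < Real.sqrt b := Real.sqrt_pos.mpr hb0
  have hεs : 0 < Real.sqrt ε := Real.sqrt_pos.mpr hε
  have ha2 : Real.sqrt a ^ 2 = a := Real.sq_sqrt ha0.le
  have hb2 : Real.sqrt b ^ 2 = b := Real.sq_sqrt hb0.le
  have key : (Real.sqrt a)⁻¹ - (Real.sqrt b)⁻¹
      = (b - a) / (Real.sqrt a * Real.sqrt b * (Real.sqrt a + Real.sqrt b)) := by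
    rw [eq_div_iff (by positivity)]
    have ha' : (Real.sqrt a)⁻¹ * Real.sqrt a = 1 := inv_mul_cancel₀ hsa.ne'
    have hb' : (Real.sqrt b)⁻¹ * Real.sqrt b = 1 := inv_mul_cancel₀ hsb.ne'
    linear_combination (Real.sqrt b * (Real.sqrt a + Real.sqrt b)) * ha'
      - (Real.sqrt a * (Real.sqrt a + Real.sqrt b)) * hb' + hb2 - ha2
  have hle1 : Real.sqrt t * Real.sqrt ε ≤ Real.sqrt a := by
    rw [← Real.sqrt_mul ht0.le]
    exact Real.sqrt_le_sqrt ha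
  have hle2 : Real.sqrt ε ≤ Real.sqrt b := Real.sqrt_le_sqrt hb
  have hle3 : Real.sqrt ε ≤ Real.sqrt a + Real.sqrt b :=
    le_trans hle2 (le_add_of_nonneg_left hsa.le)
  have hD : Real.sqrt t * Real.sqrt ε * Real.sqrt ε * Real.sqrt ε
      ≤ Real.sqrt a * Real.sqrt b * (Real.sqrt a + Real.sqrt b) := by
    have h1 : Real.sqrt t * Real.sqrt ε * Real.sqrt ε ≤ Real.sqrt a * Real.sqrt b := by
      apply mul_le_mul hle1 hle2 hεs.le (by positivity)
    apply mul_le_mul h1 hle3 hεs.le (by positivity)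
  have h1 : Real.sqrt ε * Real.sqrt ε = ε := Real.mul_self_sqrt hε.le
  have heq : (Real.sqrt t)⁻¹ * |a - b| / (ε * Real.sqrt ε)
      = |b - a| / (Real.sqrt t * Real.sqrt ε * Real.sqrt ε * Real.sqrt ε) := by
    have hden : Real.sqrt t * Real.sqrt ε * Real.sqrt ε * Real.sqrt ε
        = Real.sqrt t * (ε * Real.sqrt ε) := by linear_combination (Real.sqrt t * Real.sqrt ε) * h1
    rw [hden, abs_sub_comm a b, inv_mul_eq_div, div_div]
  rw [key, abs_div,
    abs_of_nonneg (by positivity : (0:ℝ) ≤ Real.sqrt a * Real.sqrt b * (Real.sqrt a + Real.sqrt b)),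
    heq]
  gcongr

lemma mu_lower (c₀ : ℝ)
    (n d : ℕ) (hd : 0 < d) (hdn : d ≤ n)
    (UP : Matrix (Fin n) (Fin d) ℝ) (lam : Fin d → ℝ)
    (hUP : UPᵀ * UP = 1) (hlammono : ∀ k l : Fin d, k ≤ l → lam l ≤ lam k)
    (lamd : ℝ) (hlamd : lamd = lam ⟨d - 1, Nat.sub_lt hd Nat.one_pos⟩)
    (P M : Matrix (Fin n) (Fin n) ℝ)
    (hP : P = UP * Matrix.diagonal lam * UPᵀ)
    (hMP : specNorm (M - P) ≤ c₀ * lamd)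
    (W : Matrix (Fin n) (Fin n) ℝ) (mu : Fin n → ℝ)
    (hW : Wᵀ * W = 1) (hmumono : ∀ k l : Fin n, k ≤ l → mu l ≤ mu k)
    (hM : M = W * Matrix.diagonal mu * Wᵀ) :
    ∀ k : Fin d, (1 - c₀) * lamd ≤ mu (Fin.castLE hdn k) := by
  have h' : d - 1 ≤ n := le_trans (Nat.sub_le d 1) hdn
  set jstar : Fin n := Fin.castLE hdn ⟨d - 1, Nat.sub_lt hd Nat.one_pos⟩ with hjstar
  -- main claim: bound at jstar
  suffices hmain : (1 - c₀) * lamd ≤ mu jstar by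
    intro k
    refine le_trans hmain (hmumono _ _ ?_)
    simp only [Fin.le_def, Fin.coe_castLE, hjstar]
    omega
  -- find a kernel vector
  set B : Matrix (Fin (d-1)) (Fin d) ℝ := fun j k => (Wᵀ * UP) (Fin.castLE h' j) k with hB
  obtain ⟨y, hy0, hBy⟩ := exists_ker hd B
  set s : ℝ := y ⬝ᵥ y with hs
  have hspos : 0 < s := by
    rcases lt_or_eq_of_le (Finset.sum_nonneg (fun i _ => mul_self_nonneg (y i)) :
      (0:ℝ) ≤ y ⬝ᵥ y) with h | h
    · exact h
    · exact absurd (dotProduct_self_eq_zero.mp h.symm) hy0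
  set x : Fin n → ℝ := UP.mulVec y with hx
  set z : Fin n → ℝ := Wᵀ.mulVec x with hz
  have hWW : W * Wᵀ = 1 := mul_eq_one_comm.mp hW
  -- z vanishes on first d-1 coordinates
  have hz0 : ∀ j : Fin n, (j : ℕ) < d - 1 → z j = 0 := by
    intro j hj
    have h1 : z j = B.mulVec y ⟨j, hj⟩ := by
      have hj' : Fin.castLE h' ⟨(j:ℕ), hj⟩ = j := rfl
      simp only [hz, hx, Matrix.mulVec_mulVec, hB, Matrix.mulVec, dotProduct]
      rw [hj']
    rw [h1, hBy]
    rfl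
  -- norms
  have hxx : x ⬝ᵥ x = s := by rw [hx]; exact dot_sq UP hUP y
  have hzz : z ⬝ᵥ z = s := by
    rw [hz]
    have : (Wᵀ)ᵀ * Wᵀ = 1 := by rw [Matrix.transpose_transpose]; exact hWW
    rw [dot_sq Wᵀ this x, hxx]
  -- quadratic form of M
  have hqM : x ⬝ᵥ M.mulVec x = z ⬝ᵥ (Matrix.diagonal mu).mulVec z := by
    rw [hM]
    have : W * Matrix.diagonal mu * Wᵀ = (Wᵀ)ᵀ * Matrix.diagonal mu * Wᵀ := by
      rw [Matrix.transpose_transpose]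
    rw [this, dot_congr, hz]
  -- upper bound for quadratic form of M
  have hup : x ⬝ᵥ M.mulVec x ≤ mu jstar * s := by
    rw [hqM]
    have hsum : z ⬝ᵥ (Matrix.diagonal mu).mulVec z = ∑ j, mu j * z j ^ 2 := by
      simp [dotProduct, Matrix.mulVec_diagonal, sq]
      congr 1; funext j; ring
    rw [hsum, ← hzz]
    have : z ⬝ᵥ z = ∑ j, z j ^ 2 := by simp [dotProduct, sq]
    rw [this, Finset.mul_sum]
    apply Finset.sum_le_sum
    intro j _
    rcases lt_or_ge (j : ℕ) (d - 1) with hj | hj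
    · rw [hz0 j hj]; simp
    · have : mu j ≤ mu jstar := by
        apply hmumono
        simp only [Fin.le_def, Fin.coe_castLE, hjstar]
        exact hj
      exact mul_le_mul_of_nonneg_right this (sq_nonneg _)
  -- lower bound: quadratic form of P
  have hqP : lamd * s ≤ x ⬝ᵥ P.mulVec x := by
    rw [hP]
    have h2 : UP * Matrix.diagonal lam * UPᵀ = (UPᵀ)ᵀ * Matrix.diagonal lam * UPᵀ := by
      rw [Matrix.transpose_transpose]
    rw [h2, dot_congr]
    have h3 : UPᵀ.mulVec x = y := by
      rw [hx, Matrix.mulVec_mulVec, hUP, Matrix.one_mulVec]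
    rw [h3]
    have hsum : y ⬝ᵥ (Matrix.diagonal lam).mulVec y = ∑ k, lam k * y k ^ 2 := by
      simp [dotProduct, Matrix.mulVec_diagonal, sq]
      congr 1; funext k; ring
    have hsum2 : s = ∑ k, y k ^ 2 := by simp [hs, dotProduct, sq]
    rw [hsum, hsum2, Finset.mul_sum]
    apply Finset.sum_le_sum
    intro k _
    have : lamd ≤ lam k := by
      rw [hlamd]
      apply hlammono
      simp only [Fin.le_def]
      omega
    exact mul_le_mul_of_nonneg_right this (sq_nonneg _)
  -- perturbation
  have hpert : -(c₀ * lamd * s) ≤ x ⬝ᵥ (M - P).mulVec x := by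
    have h1 := quad_bound (M - P) x
    have h2 : specNorm (M - P) * (x ⬝ᵥ x) ≤ c₀ * lamd * s := by
      rw [hxx]
      exact mul_le_mul_of_nonneg_right hMP hspos.le
    nlinarith [neg_abs_le (x ⬝ᵥ (M - P).mulVec x)]
  have hsplit : x ⬝ᵥ M.mulVec x = x ⬝ᵥ P.mulVec x + x ⬝ᵥ (M - P).mulVec x := by
    rw [Matrix.sub_mulVec, dotProduct_sub]
    ring
  have hfinal : (1 - c₀) * lamd * s ≤ mu jstar * s := by nlinarith
  exact le_of_mul_le_mul_right hfinal hspos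

/-- second and third inequalities of Proposition B.2. The
approximate-commutation bound transfers to square roots and inverse square roots
of the top eigenvalue matrices. -/
theorem stmt7 (c₀ : ℝ) (hc₀0 : 0 ≤ c₀) (hc₀1 : c₀ < 1) :
    ∃ C : ℝ, 0 < C ∧
      ∀ (n d : ℕ) (hd : 0 < d) (hdn : d ≤ n)
        (UP : Matrix (Fin n) (Fin d) ℝ) (lam : Fin d → ℝ),
        UPᵀ * UP = 1 → (∀ k, 0 < lam k) → (∀ k l : Fin d, k ≤ l → lam l ≤ lam k) →
      ∀ lamd : ℝ, lamd = lam ⟨d - 1, Nat.sub_lt hd Nat.one_pos⟩ →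
      ∀ P M : Matrix (Fin n) (Fin n) ℝ,
        P = UP * Matrix.diagonal lam * UPᵀ → Mᵀ = M →
        specNorm (M - P) ≤ c₀ * lamd →
      ∀ (W : Matrix (Fin n) (Fin n) ℝ) (mu : Fin n → ℝ),
        Wᵀ * W = 1 → (∀ k l : Fin n, k ≤ l → mu l ≤ mu k) →
        M = W * Matrix.diagonal mu * Wᵀ →
      ∀ V : Matrix (Fin d) (Fin d) ℝ, Vᵀ * V = 1 →
        frobNorm (V * Matrix.diagonal
              (fun k : Fin d => Real.sqrt (mu (Fin.castLE hdn k)))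
            - Matrix.diagonal (fun k => Real.sqrt (lam k)) * V)
          ≤ C * frobNorm (V * Matrix.diagonal (fun k : Fin d => mu (Fin.castLE hdn k))
              - Matrix.diagonal lam * V) / Real.sqrt lamd
        ∧
        frobNorm (V * Matrix.diagonal
              (fun k : Fin d => (Real.sqrt (mu (Fin.castLE hdn k)))⁻¹)
            - Matrix.diagonal (fun k => (Real.sqrt (lam k))⁻¹) * V)
          ≤ C * frobNorm (V * Matrix.diagonal (fun k : Fin d => mu (Fin.castLE hdn k))
              - Matrix.diagonal lam * V) / (lamd * Real.sqrt lamd) := by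
  have ht0 : 0 < 1 - c₀ := by linarith
  set C : ℝ := (Real.sqrt (1 - c₀))⁻¹ with hC
  have hCpos : 0 < C := by positivity
  have hC1 : 1 ≤ C := by
    rw [hC, le_inv_comm₀ one_pos (Real.sqrt_pos.mpr ht0)]
    simpa using Real.sqrt_le_one.mpr (show (1:ℝ) - c₀ ≤ 1 by linarith)
  refine ⟨C, hCpos, ?_⟩
  intro n d hd hdn UP lam hUP hlam hlammono lamd hlamd P M hP hMsymm hMP W mu hW hmumono hM V hV
  have hlamd0 : 0 < lamd := hlamd ▸ hlam _
  have hslamd : 0 < Real.sqrt lamd := Real.sqrt_pos.mpr hlamd0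
  have hmu := mu_lower c₀ n d hd hdn UP lam hUP hlammono lamd hlamd P M hP hMP W mu hW hmumono hM
  have hlamk : ∀ k : Fin d, lamd ≤ lam k := by
    intro k
    rw [hlamd]
    apply hlammono
    simp only [Fin.le_def]
    omega
  have hmu0 : ∀ k : Fin d, 0 ≤ mu (Fin.castLE hdn k) := by
    intro k
    have := hmu k
    nlinarith
  constructor
  · rw [mul_div_right_comm]
    apply frob_le _ _ _ (by positivity)
    intro i j
    simp only [Matrix.sub_apply, Matrix.mul_diagonal, Matrix.diagonal_mul]
    have h1 : V i j * Real.sqrt (mu (Fin.castLE hdn j)) - Real.sqrt (lam i) * V i j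
        = V i j * (Real.sqrt (mu (Fin.castLE hdn j)) - Real.sqrt (lam i)) := by ring
    have h2 : V i j * mu (Fin.castLE hdn j) - lam i * V i j
        = V i j * (mu (Fin.castLE hdn j) - lam i) := by ring
    rw [h1, h2, abs_mul, abs_mul]
    have h3 := sqrt_diff (mu (Fin.castLE hdn j)) (lam i) lamd (hmu0 j) hlamd0 (hlamk i)
    calc |V i j| * |Real.sqrt (mu (Fin.castLE hdn j)) - Real.sqrt (lam i)|
        ≤ |V i j| * (|mu (Fin.castLE hdn j) - lam i| / Real.sqrt lamd) :=
          mul_le_mul_of_nonneg_left h3 (abs_nonneg _)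
      _ ≤ C * (|V i j| * |mu (Fin.castLE hdn j) - lam i|) / Real.sqrt lamd := by
          rw [← mul_div_assoc]
          gcongr ?_ / _
          exact le_mul_of_one_le_left (by positivity) hC1
      _ = C / Real.sqrt lamd * (|V i j| * |mu (Fin.castLE hdn j) - lam i|) := by ring
  · rw [mul_div_right_comm]
    apply frob_le _ _ _ (by positivity)
    intro i j
    simp only [Matrix.sub_apply, Matrix.mul_diagonal, Matrix.diagonal_mul]
    have h1 : V i j * (Real.sqrt (mu (Fin.castLE hdn j)))⁻¹ - (Real.sqrt (lam i))⁻¹ * V i j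
        = V i j * ((Real.sqrt (mu (Fin.castLE hdn j)))⁻¹ - (Real.sqrt (lam i))⁻¹) := by ring
    have h2 : V i j * mu (Fin.castLE hdn j) - lam i * V i j
        = V i j * (mu (Fin.castLE hdn j) - lam i) := by ring
    rw [h1, h2, abs_mul, abs_mul]
    have h3 := inv_sqrt_diff (mu (Fin.castLE hdn j)) (lam i) lamd (1 - c₀) ht0
      (by have := hmu j; linarith) hlamd0 (hlamk i)
    calc |V i j| * |(Real.sqrt (mu (Fin.castLE hdn j)))⁻¹ - (Real.sqrt (lam i))⁻¹|
        ≤ |V i j| * (C * |mu (Fin.castLE hdn j) - lam i| / (lamd * Real.sqrt lamd)) :=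
          mul_le_mul_of_nonneg_left h3 (abs_nonneg _)
      _ = C / (lamd * Real.sqrt lamd) * (|V i j| * |mu (Fin.castLE hdn j) - lam i|) := by
          ring
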